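/- The function f(k) = k·cos(π/(2k))/(k−1) is strictly decreasing for real k ≥ 2 (in particular, for integers k ≥ 2, f(k+1) < f(k)). -/

import Mathlib

open Real

lemma gCHSH_hasDerivAt (k : ℝ) (hk0 : k ≠ 0) (hk1 : k - 1 ≠ 0) :
    HasDerivAt (fun k : ℝ => k * Real.cos (Real.pi / (2 * k)) / (k - 1))
      ((Real.pi * (k - 1) * Real.sin (Real.pi / (2 * k)) / (2 * k)
        - Real.cos (Real.pi / (2 * k))) / (k - 1) ^ 2) k := by
  have h2k : (2 : ℝ) * k ≠ 0 := by simp [hk0]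
  have hden : HasDerivAt (fun y : ℝ => 2 * y) 2 k := by
    simpa using (hasDerivAt_id k).const_mul (2 : ℝ)
  have hg : HasDerivAt (fun k : ℝ => Real.pi / (2 * k))
      ((0 * (2 * k) - Real.pi * 2) / (2 * k) ^ 2) k :=
    (hasDerivAt_const k Real.pi).div hden h2k
  have hcos := hg.cos
  have hnum := (hasDerivAt_id k).mul hcos
  have h := hnum.div ((hasDerivAt_id k).sub_const 1) hk1
  convert h using 1
  case e'_9 =>
    simp only [id, Pi.mul_apply]
    field_simp
    ring
  all_goals rfl

theorem gCHSH_ratio_strictAnti :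
    StrictAntiOn (fun k : ℝ => k * Real.cos (Real.pi / (2 * k)) / (k - 1))
      (Set.Ici (2 : ℝ)) := by
  have hpi := Real.pi_pos
  apply strictAntiOn_of_deriv_neg (convex_Ici 2)
  · apply ContinuousOn.div
    · exact continuousOn_id.mul (Real.continuous_cos.comp_continuousOn
        (continuousOn_const.div (continuous_const.mul continuous_id).continuousOn
          (fun x hx => by
            have : (2:ℝ) ≤ x := hx
            positivity)))
    · exact continuousOn_id.sub continuousOn_const
    · intro x hx
      have : (2:ℝ) ≤ x := hx
      exact sub_ne_zero.mpr (by linarith)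
  · intro k hk
    rw [interior_Ici] at hk
    have hk2 : (2:ℝ) < k := hk
    have hk0 : k ≠ 0 := by linarith
    have hk1 : k - 1 ≠ 0 := by intro h; nlinarith [sub_eq_zero.mp h]
    rw [(gCHSH_hasDerivAt k hk0 hk1).deriv]
    set θ := Real.pi / (2 * k) with hθ
    have hθpos : 0 < θ := by positivity
    have hθlt : θ < Real.pi / 4 := by
      rw [hθ, div_lt_div_iff₀ (by positivity) (by norm_num)]
      nlinarith
    have hsin : Real.sin θ < θ := Real.sin_lt hθpos
    have hcos : Real.sqrt 2 / 2 ≤ Real.cos θ := by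
      rw [← Real.cos_pi_div_four]
      apply Real.cos_le_cos_of_nonneg_of_le_pi hθpos.le
      · linarith [Real.pi_pos]
      · linarith
    have hsqrt : (1.41 : ℝ) < Real.sqrt 2 := by
      rw [show (1.41:ℝ) = Real.sqrt (1.41^2) by
        rw [Real.sqrt_sq]; norm_num]
      exact Real.sqrt_lt_sqrt (by positivity) (by norm_num)
    have hpilt : Real.pi < 3.15 := Real.pi_lt_d2
    apply div_neg_of_neg_of_pos
    · have hsinpos : 0 < Real.sin θ := Real.sin_pos_of_pos_of_lt_pi hθpos (by linarith)
      have key : Real.pi * (k - 1) * Real.sin θ / (2 * k)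
          < Real.pi ^ 2 * (k - 1) / (4 * k ^ 2) := by
        rw [div_lt_div_iff₀ (by positivity) (by positivity)]
        have h1 : Real.sin θ < Real.pi / (2 * k) := hsin
        have h1' : Real.sin θ * (2 * k) < Real.pi := (lt_div_iff₀ (by positivity)).mp h1
        nlinarith [mul_lt_mul_of_pos_left h1'
          (show (0:ℝ) < Real.pi * (k - 1) * (2 * k) by
            apply mul_pos (mul_pos hpi (by linarith)); linarith)]
      have h2 : Real.pi ^ 2 * (k - 1) / (4 * k ^ 2) ≤ Real.pi ^ 2 / 16 := by
        rw [div_le_div_iff₀ (by positivity) (by norm_num)]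
        nlinarith [sq_nonneg (k - 2), sq_nonneg Real.pi]
      have h3 : Real.pi ^ 2 / 16 < Real.sqrt 2 / 2 := by nlinarith
      linarith
    · positivity
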